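/- Let t ≥ 2 be an integer and x, y reals with t ≤ x and x + 1 < y. Then ((x+1)/y)·C(x, t) + ((y−x−1)/y)·C(x+y, t) > C(y−1, t), where C(z, t) = z(z−1)···(z−t+1)/t! is the generalized binomial coefficient. -/

import Mathlib

open Finset Set

/-- The auxiliary product `∏ i < k, (z - (2+i))`. -/
private noncomputable def Qfun (k : ℕ) : ℝ → ℝ := fun z => ∏ i ∈ range k, (z - (2 + i : ℝ))

private lemma Qfun_nonneg (k : ℕ) {z : ℝ} (hz : (k + 1 : ℝ) ≤ z) : 0 ≤ Qfun k z := by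
  apply Finset.prod_nonneg
  intro i hi
  have : (i : ℝ) ≤ (k : ℝ) - 1 := by
    have : (i : ℕ) + 1 ≤ k := Finset.mem_range.mp hi
    have := (Nat.cast_le (α := ℝ)).mpr this
    push_cast at this; linarith
  linarith

private lemma Qfun_pos (k : ℕ) {z : ℝ} (hz : (k + 1 : ℝ) < z) : 0 < Qfun k z := by
  apply Finset.prod_pos
  intro i hi
  have : (i : ℝ) ≤ (k : ℝ) - 1 := by
    have : (i : ℕ) + 1 ≤ k := Finset.mem_range.mp hi
    have := (Nat.cast_le (α := ℝ)).mpr this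
    push_cast at this; linarith
  linarith

private lemma Qfun_monotoneOn (k : ℕ) : MonotoneOn (Qfun k) (Ici ((k : ℝ) + 1)) := by
  induction k with
  | zero =>
    intro a _ b _ _
    simp [Qfun]
  | succ k ih =>
    intro a ha b hb hab
    have ha0 : (↑(k + 1) : ℝ) + 1 ≤ a := Set.mem_Ici.mp ha
    have hb0 : (↑(k + 1) : ℝ) + 1 ≤ b := Set.mem_Ici.mp hb
    push_cast at ha0 hb0
    have ha' : ((k : ℝ) + 1) ≤ a := by linarith
    have hb' : ((k : ℝ) + 1) ≤ b := by linarith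
    have hkb : ((k : ℝ) + 2) ≤ b := by linarith
    have hka : ((k : ℝ) + 2) ≤ a := by linarith
    simp only [Qfun, Finset.prod_range_succ]
    have h1 : Qfun k a ≤ Qfun k b := ih ha' hb' hab
    have h2 : 0 ≤ Qfun k a := Qfun_nonneg k ha'
    have h3 : 0 ≤ a - (2 + k : ℝ) := by linarith
    have h4 : a - (2 + k : ℝ) ≤ b - (2 + k : ℝ) := by linarith
    calc Qfun k a * (a - (2 + k : ℝ)) ≤ Qfun k b * (b - (2 + k : ℝ)) := by
          apply mul_le_mul h1 h4 h3 (Qfun_nonneg k hb')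
      _ = _ := rfl

private lemma Qfun_convexOn (k : ℕ) : ConvexOn ℝ (Ici ((k : ℝ) + 1)) (Qfun k) := by
  induction k with
  | zero =>
    have : Qfun 0 = fun _ : ℝ => (1 : ℝ) := by funext z; simp [Qfun]
    rw [this]
    exact convexOn_const 1 (convex_Ici _)
  | succ k ih =>
    have hsub : Ici ((k : ℝ) + 1 + 1) ⊆ Ici ((k : ℝ) + 1) := by
      intro z hz; simp only [Set.mem_Ici] at *; linarith
    have hcast : ((k + 1 : ℕ) : ℝ) + 1 = (k : ℝ) + 1 + 1 := by push_cast; ring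
    rw [hcast]
    have hQ : Qfun (k + 1) = Qfun k * fun z => z - (2 + k : ℝ) := by
      funext z; simp [Qfun, Finset.prod_range_succ]
    rw [hQ]
    have hlin : ConvexOn ℝ (Ici ((k : ℝ) + 1 + 1)) (fun z : ℝ => z - (2 + k : ℝ)) := by
      refine ⟨convex_Ici _, ?_⟩
      intro a _ b _ p q hp hq hpq
      simp only [smul_eq_mul]
      nlinarith [hpq]
    have hlinmono : MonotoneOn (fun z : ℝ => z - (2 + k : ℝ)) (Ici ((k : ℝ) + 1 + 1)) := by
      intro a _ b _ hab; dsimp; linarith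
    refine ConvexOn.mul (ih.subset hsub (convex_Ici _)) hlin
      (fun z hz => Qfun_nonneg k (by simp only [Set.mem_Ici] at hz; linarith)) ?_ ?_
    · intro z hz; simp only [Set.mem_Ici] at hz; linarith
    · exact ((Qfun_monotoneOn k).mono hsub).monovaryOn hlinmono

private lemma key_ineq (k : ℕ) (a b m l mu : ℝ)
    (ha : (k : ℝ) + 2 ≤ a) (hab : a + 2 ≤ b) (ham : a < m)
    (hl : 0 < l) (hmu : 0 < mu) (hlmu : l + mu = 1) (hm : l * a + mu * b = m) :
    (∏ i ∈ range (k + 2), (m - (i : ℝ)))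
      < l * (∏ i ∈ range (k + 2), (a - (i : ℝ)))
        + mu * (∏ i ∈ range (k + 2), (b - (i : ℝ))) := by
  have hsplit : ∀ z : ℝ, (∏ i ∈ range (k + 2), (z - (i : ℝ))) = (z * (z - 1)) * Qfun k z := by
    intro z
    rw [show k + 2 = 2 + k from by omega, Finset.prod_range_add]
    have h2 : ∏ i ∈ range 2, (z - (i : ℝ)) = z * (z - 1) := by
      simp [Finset.prod_range_succ]
    have h3 : ∏ i ∈ range k, (z - ((2 + i : ℕ) : ℝ)) = Qfun k z := by
      unfold Qfun
      apply Finset.prod_congr rfl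
      intro i _
      push_cast
      ring
    rw [h2, h3]
  have hPstrict : m * (m - 1) < l * (a * (a - 1)) + mu * (b * (b - 1)) := by
    have hid : l * (a * (a - 1)) + mu * (b * (b - 1))
        - (l * a + mu * b) * ((l * a + mu * b) - 1) = l * mu * (a - b) ^ 2 := by
      have h1 : mu = 1 - l := by linarith
      rw [h1]; ring
    have hsq : (0 : ℝ) < (a - b) ^ 2 := by nlinarith
    rw [← hm]
    nlinarith [mul_pos (mul_pos hl hmu) hsq, hid]
  have hk0 : (0 : ℝ) ≤ (k : ℝ) := Nat.cast_nonneg k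
  have hmem_a : a ∈ Ici ((k : ℝ) + 1) := by simp only [Set.mem_Ici]; linarith
  have hmem_b : b ∈ Ici ((k : ℝ) + 1) := by simp only [Set.mem_Ici]; linarith
  have hmem_m : m ∈ Ici ((k : ℝ) + 1) := by simp only [Set.mem_Ici]; linarith
  have hQm_pos : 0 < Qfun k m := Qfun_pos k (by linarith)
  have hQconv : Qfun k m ≤ l * Qfun k a + mu * Qfun k b := by
    have := (Qfun_convexOn k).2 hmem_a hmem_b hl.le hmu.le hlmu
    simp only [smul_eq_mul] at this
    rw [hm] at this
    exact this
  have hQa : 0 ≤ Qfun k a := Qfun_nonneg k hmem_a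
  have hQb : 0 ≤ Qfun k b := Qfun_nonneg k hmem_b
  have hPa : 0 ≤ a * (a - 1) := by nlinarith
  have hPb : 0 ≤ b * (b - 1) := by nlinarith
  have hPab : a * (a - 1) ≤ b * (b - 1) := by nlinarith
  have hQab : Qfun k a ≤ Qfun k b := (Qfun_monotoneOn k) hmem_a hmem_b (by linarith)
  rw [hsplit, hsplit, hsplit]
  calc m * (m - 1) * Qfun k m
      < (l * (a * (a - 1)) + mu * (b * (b - 1))) * Qfun k m :=
        mul_lt_mul_of_pos_right hPstrict hQm_pos
    _ ≤ (l * (a * (a - 1)) + mu * (b * (b - 1))) * (l * Qfun k a + mu * Qfun k b) := by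
        apply mul_le_mul_of_nonneg_left hQconv
        positivity
    _ ≤ l * (a * (a - 1) * Qfun k a) + mu * (b * (b - 1) * Qfun k b) := by
        have hid2 : l * (a * (a - 1) * Qfun k a) + mu * (b * (b - 1) * Qfun k b)
            - (l * (a * (a - 1)) + mu * (b * (b - 1))) * (l * Qfun k a + mu * Qfun k b)
            = l * mu * ((b * (b - 1) - a * (a - 1)) * (Qfun k b - Qfun k a)) := by
          have h1 : mu = 1 - l := by linarith
          rw [h1]; ring
        have hpos : 0 ≤ l * mu * ((b * (b - 1) - a * (a - 1)) * (Qfun k b - Qfun k a)) :=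
          mul_nonneg (mul_pos hl hmu).le
            (mul_nonneg (by linarith) (by linarith))
        linarith

/-- Jensen-type strict inequality for the real-argument binomial coefficient
`C(z,t) = z(z−1)⋯(z−t+1)/t!`:
for integer `t ≥ 2` and reals `t ≤ x`, `x + 1 < y`,
`((x+1)/y)·C(x,t) + ((y−x−1)/y)·C(x+y,t) > C(y−1,t)`. -/
theorem jensen_binomial (t : ℕ) (ht : 2 ≤ t) (x y : ℝ) (hx : (t : ℝ) ≤ x) (hxy : x + 1 < y)
    (C : ℝ → ℕ → ℝ)
    (hC : ∀ z n, C z n = (∏ i ∈ Finset.range n, (z - (i : ℝ))) / (Nat.factorial n : ℝ)) :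
    ((x + 1) / y) * C x t + ((y - x - 1) / y) * C (x + y) t > C (y - 1) t := by
  obtain ⟨k, rfl⟩ : ∃ k, t = k + 2 := ⟨t - 2, by omega⟩
  have htx : (k : ℝ) + 2 ≤ x := by
    have : ((k + 2 : ℕ) : ℝ) ≤ x := hx
    push_cast at this; linarith
  have hk0 : (0 : ℝ) ≤ (k : ℝ) := Nat.cast_nonneg k
  have hy0 : (0 : ℝ) < y := by linarith
  have hlpos : 0 < (x + 1) / y := div_pos (by linarith) hy0
  have hmupos : 0 < (y - x - 1) / y := div_pos (by linarith) hy0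
  have hlmu : (x + 1) / y + (y - x - 1) / y = 1 := by field_simp; ring
  have hm : ((x + 1) / y) * x + ((y - x - 1) / y) * (x + y) = y - 1 := by
    field_simp
    ring
  have key := key_ineq k x (x + y) (y - 1) ((x + 1) / y) ((y - x - 1) / y)
    htx (by linarith) (by linarith) hlpos hmupos hlmu hm
  have hfac : (0 : ℝ) < (Nat.factorial (k + 2) : ℝ) := by
    exact_mod_cast Nat.factorial_pos _
  rw [hC, hC, hC, gt_iff_lt]
  have heq : (x + 1) / y * ((∏ i ∈ Finset.range (k + 2), (x - (i : ℝ))) / (Nat.factorial (k + 2) : ℝ))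
      + (y - x - 1) / y *
        ((∏ i ∈ Finset.range (k + 2), (x + y - (i : ℝ))) / (Nat.factorial (k + 2) : ℝ))
      = ((x + 1) / y * (∏ i ∈ Finset.range (k + 2), (x - (i : ℝ)))
        + (y - x - 1) / y * (∏ i ∈ Finset.range (k + 2), (x + y - (i : ℝ))))
          / (Nat.factorial (k + 2) : ℝ) := by
    ring
  rw [heq]
  exact div_lt_div_of_pos_right key hfac
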